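/- arXiv:1905.11694 — 3 statements merged into one kernel-verified Lean document; each statement's English description precedes it below -/
import Mathlib

section
/- Given five average values S_top, S_bot, Ŝ_top, Ŝ_bot, S_n and total count n from the overlapping-region query system (with the denominators S_bot − Ŝ_top, S_top − Ŝ_bot nonzero, and M ≠ 0), the quantities B, T, M, and S_mid are uniquely determined: any two solutions (B, T, M, S_mid) and (B', T', M', S'_mid) of the system n·S_n = B·S_bot + T·S_top − M·S_mid, B + T − M = n, T·S_top = (T−M)·Ŝ_top + M·S_mid, B·S_bot = (B−M)·Ŝ_bot + M·S_mid with M, M' ≠ 0 coincide. -/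
theorem stmt3 (n Sn Sbot Stop Shtop Shbot : ℝ)
    (hne1 : Sbot - Shtop ≠ 0) (hne2 : Stop - Shbot ≠ 0)
    (B T M Smid B' T' M' Smid' : ℝ)
    (hM : M ≠ 0) (hM' : M' ≠ 0)
    (h1 : n * Sn = B * Sbot + T * Stop - M * Smid)
    (h2 : B + T - M = n)
    (h3 : T * Stop = (T - M) * Shtop + M * Smid)
    (h4 : B * Sbot = (B - M) * Shbot + M * Smid)
    (h1' : n * Sn = B' * Sbot + T' * Stop - M' * Smid')
    (h2' : B' + T' - M' = n)
    (h3' : T' * Stop = (T' - M') * Shtop + M' * Smid')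
    (h4' : B' * Sbot = (B' - M') * Shbot + M' * Smid') :
    B = B' ∧ T = T' ∧ M = M' ∧ Smid = Smid' := by
  have hB : B * (Sbot - Shtop) = n * (Sn - Shtop) := by
    linear_combination (-1) * h1 + (-1) * h3 + (-Shtop) * h2
  have hB' : B' * (Sbot - Shtop) = n * (Sn - Shtop) := by
    linear_combination (-1) * h1' + (-1) * h3' + (-Shtop) * h2'
  have hT : T * (Stop - Shbot) = n * (Sn - Shbot) := by
    linear_combination (-1) * h1 + (-1) * h4 + (-Shbot) * h2
  have hT' : T' * (Stop - Shbot) = n * (Sn - Shbot) := by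
    linear_combination (-1) * h1' + (-1) * h4' + (-Shbot) * h2'
  have eB : B = B' := mul_right_cancel₀ hne1 (hB.trans hB'.symm)
  have eT : T = T' := mul_right_cancel₀ hne2 (hT.trans hT'.symm)
  have eM : M = M' := by linarith [h2, h2']
  refine ⟨eB, eT, eM, ?_⟩
  subst eT eM
  have hMS : M * Smid = M * Smid' := by linear_combination h3' - h3
  exact mul_left_cancel₀ hM hMS
end

section
/- For every n ≥ 4 there exists an injective assignment of speeds s : Fin n → ℝ to vehicles at positions x_1 < x_2 < ⋯ < x_n such that for every contiguous range [x_i, x_j] containing at least 4 vehicles, none of min, max, or lower-median of {s_i, …, s_j} equals s_1. Consequently, an attacker restricted to F_min, F_max, F_med queries with query-set-size threshold k = 4 never observes s_1. -/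
/-- The lower median of a finite set of reals: the `⌈m/2⌉`-th smallest of its
`m` elements (the lower of the two central values when `m` is even). -/
noncomputable def lowerMedian (F : Finset ℝ) : ℝ :=
  (F.sort (· ≤ ·)).getD ((F.card - 1) / 2) 0

lemma lowerMedian_mem (F : Finset ℝ) (h : F.Nonempty) : lowerMedian F ∈ F := by
  unfold lowerMedian
  have hc : 0 < F.card := Finset.card_pos.mpr h
  have hl : (F.card - 1) / 2 < (F.sort (· ≤ ·)).length := by
    rw [Finset.length_sort]; omega
  rw [List.getD_eq_getElem _ _ hl]
  exact (Finset.mem_sort _).mp (List.getElem_mem hl)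

lemma sorted_getD_lt (F : Finset ℝ) (c : ℝ) (t : ℕ) (ht : t < F.card)
    (hN : t < (F.filter (· < c)).card) : (F.sort (· ≤ ·)).getD t 0 < c := by
  set l := F.sort (· ≤ ·) with hldef
  have hlen : l.length = F.card := Finset.length_sort _
  have ht' : t < l.length := by omega
  rw [List.getD_eq_getElem _ _ ht']
  by_contra hcon
  push_neg at hcon
  have hsub : F.filter (· < c) ⊆ (l.take t).toFinset := by
    intro x hx
    simp only [Finset.mem_filter] at hx
    obtain ⟨hxF, hxc⟩ := hx
    have hxl : x ∈ l := (Finset.mem_sort _).mpr hxF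
    obtain ⟨idx, hidx, hget⟩ := List.getElem_of_mem hxl
    have hidxt : idx < t := by
      by_contra hle
      push_neg at hle
      have hmono : l[t] ≤ l[idx] :=
        (Finset.pairwise_sort _ _).rel_get_of_le (a := ⟨t, ht'⟩) (b := ⟨idx, hidx⟩) hle
      rw [hget] at hmono
      linarith
    rw [List.mem_toFinset]
    exact List.mem_take_iff_getElem.mpr ⟨idx, by omega, hget⟩
  have : (F.filter (· < c)).card ≤ t := by
    calc (F.filter (· < c)).card ≤ (l.take t).toFinset.card := Finset.card_le_card hsub
      _ ≤ (l.take t).length := List.toFinset_card_le _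
      _ ≤ t := by simp
  omega

theorem stmt7 (n : ℕ) (hn : 4 ≤ n) :
    ∃ s : Fin n → ℝ, Function.Injective s ∧
      ∀ i j : Fin n, (hij : i ≤ j) → 4 ≤ (j : ℕ) - (i : ℕ) + 1 →
        ((Finset.Icc i j).image s).min'
            ⟨s i, Finset.mem_image_of_mem s (Finset.mem_Icc.mpr ⟨le_refl i, hij⟩)⟩
          ≠ s ⟨0, by omega⟩ ∧
        ((Finset.Icc i j).image s).max'
            ⟨s i, Finset.mem_image_of_mem s (Finset.mem_Icc.mpr ⟨le_refl i, hij⟩)⟩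
          ≠ s ⟨0, by omega⟩ ∧
        lowerMedian ((Finset.Icc i j).image s) ≠ s ⟨0, by omega⟩ := by
  set s : Fin n → ℝ := fun k => if k.val = 0 then 0 else if k.val = 1 then 1 else -(k.val : ℝ) with hs
  have hs0 : s ⟨0, by omega⟩ = 0 := by simp [hs]
  have hval : ∀ k : Fin n, 2 ≤ k.val → s k = -(k.val : ℝ) := by
    intro k hk
    simp only [hs]
    rw [if_neg (by omega), if_neg (by omega)]
  have hinj : Function.Injective s := by
    intro a b hab
    simp only [hs] at hab
    apply Fin.ext
    split_ifs at hab with h1 h2 h3 h4 h5 <;>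
      first
        | omega
        | (exfalso
           have ha2 : 2 ≤ a.val := by omega
           have ha : (2:ℝ) ≤ (a.val : ℝ) := by exact_mod_cast ha2
           linarith)
        | (exfalso
           have hb2 : 2 ≤ b.val := by omega
           have hb : (2:ℝ) ≤ (b.val : ℝ) := by exact_mod_cast hb2
           linarith)
        | (have : (a.val : ℝ) = (b.val : ℝ) := by linarith
           exact_mod_cast this)
  refine ⟨s, hinj, ?_⟩
  intro i j hij hsize
  have hij' : i.val ≤ j.val := hij
  have hjval : 3 ≤ j.val := by omega
  set F := (Finset.Icc i j).image s with hF
  have hne : s i ∈ F := Finset.mem_image_of_mem s (Finset.mem_Icc.mpr ⟨le_refl i, hij⟩)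
  have hmem0 : ∀ x ∈ F, ∃ k : Fin n, i ≤ k ∧ k ≤ j ∧ s k = x := by
    intro x hx
    obtain ⟨k, hk, hkx⟩ := Finset.mem_image.mp hx
    rw [Finset.mem_Icc] at hk
    exact ⟨k, hk.1, hk.2, hkx⟩
  by_cases hi0 : i.val = 0
  · -- window starts at 0
    have hi : i = ⟨0, by omega⟩ := Fin.ext hi0
    -- min' : bounded above by s j which is negative
    have hjmem : j ∈ Finset.Icc i j := Finset.mem_Icc.mpr ⟨hij, le_refl j⟩
    have hsj : s j = -(j.val : ℝ) := hval j (by omega)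
    have hsjneg : s j < 0 := by
      rw [hsj]; have : (3:ℝ) ≤ (j.val : ℝ) := by exact_mod_cast hjval
      linarith
    constructor
    · have hmin : F.min' ⟨s i, hne⟩ ≤ s j :=
        Finset.min'_le _ _ (Finset.mem_image_of_mem s hjmem)
      rw [hs0]; linarith
    constructor
    · -- max' ≥ s 1 = 1
      have h1n : 1 < n := by omega
      have h1mem : (⟨1, h1n⟩ : Fin n) ∈ Finset.Icc i j := by
        rw [Finset.mem_Icc]
        constructor
        · exact (by simp [Fin.le_def, hi0] : i ≤ (⟨1, h1n⟩ : Fin n))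
        · exact (by simp [Fin.le_def]; omega : (⟨1, h1n⟩ : Fin n) ≤ j)
      have hs1 : s ⟨1, h1n⟩ = 1 := by simp [hs]
      have hmax : s ⟨1, h1n⟩ ≤ F.max' ⟨s i, hne⟩ :=
        Finset.le_max' _ _ (Finset.mem_image_of_mem s h1mem)
      rw [hs0, hs1] at *
      intro hcon; rw [hcon] at hmax; linarith
    · -- median
      have hcardIcc : (Finset.Icc i j).card = j.val + 1 := by
        rw [Fin.card_Icc]; omega
      have hcardF : F.card = j.val + 1 := by
        rw [hF, Finset.card_image_of_injective _ hinj, hcardIcc]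
      -- negative elements: image of Icc ⟨2⟩ j
      have h2n : 2 < n := by omega
      have hsub2 : (Finset.Icc (⟨2, h2n⟩ : Fin n) j).image s ⊆ F.filter (· < 0) := by
        intro x hx
        obtain ⟨k, hk, hkx⟩ := Finset.mem_image.mp hx
        rw [Finset.mem_Icc] at hk
        have hk2 : 2 ≤ k.val := hk.1
        rw [Finset.mem_filter]
        constructor
        · rw [← hkx]
          exact Finset.mem_image_of_mem s (Finset.mem_Icc.mpr
            ⟨by rw [Fin.le_def, hi0]; omega, hk.2⟩)
        · rw [← hkx, hval k hk2]
          have : (2:ℝ) ≤ (k.val : ℝ) := by exact_mod_cast hk2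
          show -(k.val:ℝ) < 0
          linarith
      have hcard2 : ((Finset.Icc (⟨2, h2n⟩ : Fin n) j).image s).card = j.val - 1 := by
        rw [Finset.card_image_of_injective _ hinj, Fin.card_Icc]
        simp only [Fin.val_mk]
        omega
      have hNcard : j.val - 1 ≤ (F.filter (· < 0)).card := by
        rw [← hcard2]; exact Finset.card_le_card hsub2
      have hmed : lowerMedian F < 0 := by
        unfold lowerMedian
        apply sorted_getD_lt
        · omega
        · rw [hcardF]
          have : (j.val + 1 - 1) / 2 < j.val - 1 := by omega
          omega
      rw [hs0]; linarith
  · -- window does not contain index 0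
    have h0 : s ⟨0, by omega⟩ ∉ F := by
      intro hmem
      obtain ⟨k, hk1, hk2, hk3⟩ := hmem0 _ hmem
      have : k = ⟨0, by omega⟩ := hinj hk3
      have : k.val = 0 := by rw [this]
      have : i.val ≤ k.val := hk1
      omega
    refine ⟨?_, ?_, ?_⟩
    · intro hcon
      exact h0 (hcon ▸ Finset.min'_mem F ⟨s i, hne⟩)
    · intro hcon
      exact h0 (hcon ▸ Finset.max'_mem F ⟨s i, hne⟩)
    · intro hcon
      exact h0 (hcon ▸ lowerMedian_mem F ⟨s i, hne⟩)
end

section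
/- Let s : Fin n → ℝ be injective, k = 3, and suppose game queries over contiguous windows of exactly 3 consecutive indices return the sets {min, median, max}. Then sliding the window by one position and comparing the 3-element value sets of consecutive windows identifies, for each step, the value of the vehicle that left the window: it is the unique element of the old window's value set not in the new window's value set. Iterating from the leftmost window determines s_i for all i. -/
theorem stmt19 (n : ℕ) (s : Fin n → ℝ) (hs : Function.Injective s) :
    ∀ i : ℕ, (h : i + 3 < n) →
      ((Finset.Icc (⟨i, by omega⟩ : Fin n) ⟨i + 2, by omega⟩).image s) \
        ((Finset.Icc (⟨i + 1, by omega⟩ : Fin n) ⟨i + 3, by omega⟩).image s)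
      = {s ⟨i, by omega⟩} := by
  intro i h
  have h1 : (Finset.Icc (⟨i, by omega⟩ : Fin n) ⟨i + 2, by omega⟩) =
      {⟨i, by omega⟩, ⟨i + 1, by omega⟩, ⟨i + 2, by omega⟩} := by
    ext x
    simp [Fin.le_def, Fin.ext_iff]
    omega
  have h2 : (Finset.Icc (⟨i + 1, by omega⟩ : Fin n) ⟨i + 3, by omega⟩) =
      {⟨i + 1, by omega⟩, ⟨i + 2, by omega⟩, ⟨i + 3, by omega⟩} := by
    ext x
    simp [Fin.le_def, Fin.ext_iff]
    omega
  have ne : ∀ a b : ℕ, (ha : a < n) → (hb : b < n) → a ≠ b →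
      s ⟨a, ha⟩ ≠ s ⟨b, hb⟩ := by
    intro a b ha hb hab hc
    exact hab (Fin.mk.injEq .. ▸ (hs hc))
  rw [h1, h2]
  ext x
  simp only [Finset.mem_sdiff, Finset.image_insert, Finset.image_singleton,
    Finset.mem_insert, Finset.mem_singleton]
  constructor
  · rintro ⟨h1 | h1 | h1, h2⟩
    · exact h1
    · exact absurd (Or.inl h1) h2
    · exact absurd (Or.inr (Or.inl h1)) h2
  · rintro rfl
    refine ⟨Or.inl rfl, ?_⟩
    rintro (hc | hc | hc)
    · exact ne i (i+1) (by omega) (by omega) (by omega) hc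
    · exact ne i (i+2) (by omega) (by omega) (by omega) hc
    · exact ne i (i+3) (by omega) (by omega) (by omega) hc
end
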